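/- Let Ω₀ = { (x₀-s⁻, y₀+s⁺) : ∃ μ ≥ 0, 1ᵀμ = 1, s⁻, s⁺ ≥ 0, Xμ + s⁻ ≤ x₀, Yμ - s⁺ ≥ y₀ } where X, Y are the leave-one-out data matrices. Then (x₀, y₀) is strongly Pareto efficient with respect to the full VRS technology T = { (x,y) ≥ 0 : ∃ λ ≥ 0, 1ᵀλ = 1, [X x₀]λ ≤ x, [Y y₀]λ ≥ y } if and only if Ω₀ \ {(x₀,y₀)} = ∅. -/

import Mathlib

/-- `(x₀, y₀)` is strongly Pareto efficient with respect to the full VRS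
technology (generated by the leave-one-out columns of `X, Y` together with
the column `(x₀, y₀)`) iff `Ω₀ \ {(x₀, y₀)} = ∅`, i.e. every element of
`Ω₀` has zero slacks. -/
theorem stmt_9 {m s k : ℕ} (X : Matrix (Fin m) (Fin k) ℝ) (Y : Matrix (Fin s) (Fin k) ℝ)
    (hX : ∀ i j, 0 ≤ X i j) (hY : ∀ i j, 0 ≤ Y i j)
    (x₀ : Fin m → ℝ) (y₀ : Fin s → ℝ) (hx₀ : 0 ≤ x₀) (hy₀ : 0 ≤ y₀) :
    (¬ ∃ x y, (0 ≤ x ∧ 0 ≤ y ∧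
        ∃ (lam : Fin k → ℝ) (lam₀ : ℝ), 0 ≤ lam ∧ 0 ≤ lam₀ ∧ (∑ j, lam j) + lam₀ = 1 ∧
          X.mulVec lam + lam₀ • x₀ ≤ x ∧ y ≤ Y.mulVec lam + lam₀ • y₀) ∧
      x ≤ x₀ ∧ y₀ ≤ y ∧ (x, y) ≠ (x₀, y₀)) ↔
    (∀ (μ : Fin k → ℝ) (sm : Fin m → ℝ) (sp : Fin s → ℝ),
      0 ≤ μ → ∑ j, μ j = 1 → 0 ≤ sm → 0 ≤ sp →
      X.mulVec μ + sm ≤ x₀ → y₀ ≤ Y.mulVec μ - sp → sm = 0 ∧ sp = 0) := by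
  constructor
  · intro h μ sm sp hμ hsum hsm hsp hxc hyc
    by_contra hcon
    apply h
    refine ⟨x₀ - sm, y₀ + sp, ⟨?_, ?_, μ, 0, hμ, le_refl 0, by simpa using hsum, ?_, ?_⟩,
      ?_, ?_, ?_⟩
    · intro i
      have h1 := hxc i
      simp only [Pi.add_apply] at h1
      have h0 : 0 ≤ X.mulVec μ i := by
        simp only [Matrix.mulVec, dotProduct]
        exact Finset.sum_nonneg fun j _ => mul_nonneg (hX i j) (hμ j)
      simp only [Pi.zero_apply, Pi.sub_apply]; linarith
    · intro i
      have h1 := hsp i; have h2 := hy₀ i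
      simp only [Pi.zero_apply] at h1 h2
      simp only [Pi.zero_apply, Pi.add_apply]; linarith
    · intro i
      have h1 := hxc i
      simp only [Pi.add_apply] at h1
      simp only [Pi.add_apply, Pi.smul_apply, Pi.sub_apply, smul_eq_mul, zero_mul, add_zero]
      linarith
    · intro i
      have h1 := hyc i
      simp only [Pi.sub_apply] at h1
      simp only [Pi.add_apply, Pi.smul_apply, smul_eq_mul, zero_mul, add_zero]
      linarith
    · intro i
      have h1 := hsm i; simp only [Pi.zero_apply] at h1
      simp only [Pi.sub_apply]; linarith
    · intro i
      have h1 := hsp i; simp only [Pi.zero_apply] at h1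
      simp only [Pi.add_apply]; linarith
    · intro heq
      apply hcon
      have h1 : x₀ - sm = x₀ := congrArg Prod.fst heq
      have h2 : y₀ + sp = y₀ := congrArg Prod.snd heq
      constructor
      · funext i; have := congrFun h1 i; simp only [Pi.sub_apply] at this
        simp only [Pi.zero_apply]; linarith
      · funext i; have := congrFun h2 i; simp only [Pi.add_apply] at this
        simp only [Pi.zero_apply]; linarith
  · rintro h ⟨x, y, ⟨hx, hy, lam, lam₀, hlam, hlam₀, hsum, hxc, hyc⟩, hxx, hyy, hne⟩
    by_cases hl1 : lam₀ = 1
    · have hs0 : ∑ j, lam j = 0 := by rw [hl1] at hsum; linarith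
      have hl0 : ∀ j, lam j = 0 := fun j =>
        (Finset.sum_eq_zero_iff_of_nonneg (fun j _ => hlam j)).1 hs0 j (Finset.mem_univ j)
      have hXl : ∀ i, X.mulVec lam i = 0 := by
        intro i
        simp only [Matrix.mulVec, dotProduct]
        exact Finset.sum_eq_zero fun j _ => by rw [hl0 j, mul_zero]
      have hYl : ∀ i, Y.mulVec lam i = 0 := by
        intro i
        simp only [Matrix.mulVec, dotProduct]
        exact Finset.sum_eq_zero fun j _ => by rw [hl0 j, mul_zero]
      apply hne
      have hx' : x = x₀ := by
        funext i
        have h1 := hxc i; have h2 := hxx i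
        simp only [Pi.add_apply, Pi.smul_apply, smul_eq_mul, hXl i, hl1, one_mul,
          zero_add] at h1
        linarith
      have hy' : y = y₀ := by
        funext i
        have h1 := hyc i; have h2 := hyy i
        simp only [Pi.add_apply, Pi.smul_apply, smul_eq_mul, hYl i, hl1, one_mul,
          zero_add] at h1
        linarith
      rw [hx', hy']
    · have hl2 : lam₀ ≤ 1 := by
        have : (0:ℝ) ≤ ∑ j, lam j := Finset.sum_nonneg fun j _ => hlam j
        linarith
      have ht : 0 < 1 - lam₀ := by
        rcases lt_or_eq_of_le hl2 with h' | h'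
        · linarith
        · exact absurd h' hl1
      have htne : (1 - lam₀) ≠ 0 := ne_of_gt ht
      have key := h (fun j => lam j / (1 - lam₀)) (fun i => (x₀ i - x i) / (1 - lam₀))
        (fun i => (y i - y₀ i) / (1 - lam₀))
        (fun j => div_nonneg (hlam j) ht.le)
        (by rw [← Finset.sum_div]; field_simp; linarith)
        (fun i => div_nonneg (by have := hxx i; linarith) ht.le)
        (fun i => div_nonneg (by have := hyy i; linarith) ht.le)
        ?_ ?_
      · apply hne
        obtain ⟨h1, h2⟩ := key
        have hx' : x = x₀ := by
          funext i
          have := congrFun h1 i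
          simp only [Pi.zero_apply, div_eq_zero_iff] at this
          rcases this with h' | h'
          · linarith
          · exact absurd h' htne
        have hy' : y = y₀ := by
          funext i
          have := congrFun h2 i
          simp only [Pi.zero_apply, div_eq_zero_iff] at this
          rcases this with h' | h'
          · linarith
          · exact absurd h' htne
        rw [hx', hy']
      · intro i
        have hmv : X.mulVec (fun j => lam j / (1 - lam₀)) i = X.mulVec lam i / (1 - lam₀) := by
          simp only [Matrix.mulVec, dotProduct, Finset.sum_div, mul_div_assoc]
        have h1 := hxc i
        simp only [Pi.add_apply, Pi.smul_apply, smul_eq_mul] at h1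
        simp only [Pi.add_apply, hmv]
        rw [← add_div, div_le_iff₀ ht]
        nlinarith
      · intro i
        have hmv : Y.mulVec (fun j => lam j / (1 - lam₀)) i = Y.mulVec lam i / (1 - lam₀) := by
          simp only [Matrix.mulVec, dotProduct, Finset.sum_div, mul_div_assoc]
        have h1 := hyc i
        simp only [Pi.add_apply, Pi.smul_apply, smul_eq_mul] at h1
        simp only [Pi.sub_apply, hmv]
        rw [div_sub_div_same, le_div_iff₀ ht]
        nlinarith
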